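/- Let f : X → A be a bounded continuous function with f(x) ∈ A⁺ for every x ∈ X, and suppose there is a constant K ≥ 0 such that ‖∫ λ(x) f(x) dμ(x)‖ ≤ K for every λ ∈ ℬ(X). Then for every positive linear functional ω on A, the function x ↦ ω(f(x)) is μ-integrable on X and ∫ ω(f(x)) dμ(x) ≤ ‖ω‖·K. -/

import Mathlib

open MeasureTheory
open scoped ComplexOrder ENNReal NNReal

/-- Let `A` be a C*-algebra, `X` a locally compact Hausdorff space with a
positive Radon measure `μ`.  If `f : X → A` is a bounded continuous function with positive
values and there is `K ≥ 0` with `‖∫ λ(x) f(x) dμ(x)‖ ≤ K` for every `λ ∈ ℬ(X)` (bounded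
measurable compactly supported, `0 ≤ λ ≤ 1`), then for every positive linear functional `ω`
on `A` the function `x ↦ ω (f x)` is integrable with `∫ ω (f x) dμ ≤ ‖ω‖ * K`. -/
theorem stmt0
    {X : Type*} [TopologicalSpace X] [LocallyCompactSpace X] [T2Space X]
    [MeasurableSpace X] [BorelSpace X]
    (μ : Measure X) [μ.Regular]
    {A : Type*} [NonUnitalCStarAlgebra A] [PartialOrder A] [StarOrderedRing A]
    (f : X → A) (hf : Continuous f) (hfb : ∃ C : ℝ, ∀ x, ‖f x‖ ≤ C)
    (hfpos : ∀ x, 0 ≤ f x)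
    (K : ℝ) (hK : 0 ≤ K)
    (hbound : ∀ lam : X → ℝ, Measurable lam → HasCompactSupport lam →
      (∀ x, 0 ≤ lam x) → (∀ x, lam x ≤ 1) →
      ‖∫ x, (lam x : ℂ) • f x ∂μ‖ ≤ K)
    (ω : A →L[ℂ] ℂ) (hω : ∀ a : A, 0 ≤ a → 0 ≤ ω a) :
    Integrable (fun x => ω (f x)) μ ∧ ‖∫ x, ω (f x) ∂μ‖ ≤ ‖ω‖ * K := by
  obtain ⟨C, hC⟩ := hfb
  set g : X → ℝ := fun x => (ω (f x)).re with hgdef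
  have hg0 : ∀ x, 0 ≤ g x := by
    intro x
    have h := hω (f x) (hfpos x)
    rw [Complex.le_def] at h
    simpa using h.1
  have hωf : ∀ x, ω (f x) = (g x : ℂ) := by
    intro x
    have h := hω (f x) (hfpos x)
    rw [Complex.le_def] at h
    apply Complex.ext <;> simp [g, h.2.symm]
  have hgc : Continuous g := Complex.continuous_re.comp (ω.continuous.comp hf)
  have hgB : ∀ x, g x ≤ ‖ω‖ * C := by
    intro x
    calc g x ≤ ‖ω (f x)‖ := Complex.re_le_norm _
    _ ≤ ‖ω‖ * ‖f x‖ := ω.le_opNorm _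
    _ ≤ ‖ω‖ * C := mul_le_mul_of_nonneg_left (hC x) (norm_nonneg ω)
  -- key estimate on compact sets
  have key : ∀ k : Set X, IsCompact k →
      ∫⁻ x in k, ENNReal.ofReal (g x) ∂μ ≤ ENNReal.ofReal (‖ω‖ * K) := by
    intro k hk
    have hkm : MeasurableSet k := hk.isClosed.measurableSet
    have hInt : IntegrableOn f k μ := hf.continuousOn.integrableOn_compact hk
    have hgInt : IntegrableOn g k μ := hgc.continuousOn.integrableOn_compact hk
    set lam : X → ℝ := k.indicator (fun _ => 1) with hlamdef
    have hlam_meas : Measurable lam := measurable_const.indicator hkm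
    have hlam_supp : HasCompactSupport lam :=
      HasCompactSupport.intro hk (fun x hx => Set.indicator_of_notMem hx _)
    have hb := hbound lam hlam_meas hlam_supp
      (fun x => Set.indicator_nonneg (fun _ _ => zero_le_one) x)
      (fun x => Set.indicator_le_self' (fun _ _ => zero_le_one) x)
    have heq : (fun x => (lam x : ℂ) • f x) = k.indicator f := by
      ext x
      by_cases hx : x ∈ k <;> simp [lam, hx]
    rw [heq, integral_indicator hkm] at hb
    have hω_int : ∫ x in k, ω (f x) ∂μ = ω (∫ x in k, f x ∂μ) := ω.integral_comp_comm hInt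
    have h2 : ∫ x in k, ω (f x) ∂μ = ((∫ x in k, g x ∂μ : ℝ) : ℂ) := by
      simp_rw [hωf]
      exact integral_ofReal
    have h3 : ∫ x in k, g x ∂μ ≤ ‖ω‖ * K := by
      calc ∫ x in k, g x ∂μ = (ω (∫ x in k, f x ∂μ)).re := by rw [← hω_int, h2]; simp
      _ ≤ ‖ω (∫ x in k, f x ∂μ)‖ := Complex.re_le_norm _
      _ ≤ ‖ω‖ * ‖∫ x in k, f x ∂μ‖ := ω.le_opNorm _
      _ ≤ ‖ω‖ * K := mul_le_mul_of_nonneg_left hb (norm_nonneg ω)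
    rw [← ofReal_integral_eq_lintegral_ofReal hgInt (ae_of_all _ fun x => hg0 x)]
    exact ENNReal.ofReal_le_ofReal h3
  -- estimate on open sets of finite measure
  have keyU : ∀ U : Set X, IsOpen U → μ U ≠ ∞ →
      ∫⁻ x in U, ENNReal.ofReal (g x) ∂μ ≤ ENNReal.ofReal (‖ω‖ * K) := by
    intro U hU hUfin
    refine ENNReal.le_of_forall_pos_le_add (fun ε hε _ => ?_)
    set B : ℝ≥0∞ := ENNReal.ofReal (‖ω‖ * C) with hBdef
    have hB_ne : B + 1 ≠ 0 := by simp
    have hB_top : B + 1 ≠ ∞ := ENNReal.add_ne_top.2 ⟨ENNReal.ofReal_ne_top, ENNReal.one_ne_top⟩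
    set δ : ℝ≥0∞ := ε / (B + 1) with hδdef
    have hδpos : δ ≠ 0 := by
      simp only [δ, ne_eq, ENNReal.div_eq_zero_iff]
      push_neg
      exact ⟨by exact_mod_cast hε.ne', hB_top⟩
    obtain ⟨k, hkU, hk, hkd⟩ := hU.measurableSet.exists_isCompact_diff_lt hUfin hδpos
    have hkm : MeasurableSet k := hk.isClosed.measurableSet
    calc ∫⁻ x in U, ENNReal.ofReal (g x) ∂μ
        ≤ ∫⁻ x in k ∪ (U \ k), ENNReal.ofReal (g x) ∂μ := by
          refine lintegral_mono' (Measure.restrict_mono (fun x hx => ?_) le_rfl) le_rfl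
          by_cases hxk : x ∈ k
          · exact Or.inl hxk
          · exact Or.inr ⟨hx, hxk⟩
      _ ≤ (∫⁻ x in k, ENNReal.ofReal (g x) ∂μ) + ∫⁻ x in U \ k, ENNReal.ofReal (g x) ∂μ :=
          lintegral_union_le _ _ _
      _ ≤ ENNReal.ofReal (‖ω‖ * K) + ε := by
          refine add_le_add (key k hk) ?_
          calc ∫⁻ x in U \ k, ENNReal.ofReal (g x) ∂μ
              ≤ ∫⁻ _ in U \ k, B ∂μ :=
                lintegral_mono fun x => ENNReal.ofReal_le_ofReal (hgB x)
            _ = B * μ (U \ k) := by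
                rw [lintegral_const, Measure.restrict_apply_univ]
            _ ≤ (B + 1) * δ := by
                refine mul_le_mul' le_self_add hkd.le
            _ ≤ ε := by
                rw [hδdef, ENNReal.mul_div_cancel hB_ne hB_top]
  -- the sets V n have finite measure
  set V : ℕ → Set X := fun n => {x | (1 / (n + 1) : ℝ) < g x} with hVdef
  have hVopen : ∀ n, IsOpen (V n) := fun n => isOpen_lt continuous_const hgc
  have hVfin : ∀ n, μ (V n) ≠ ∞ := by
    intro n
    set c : ℝ≥0∞ := ENNReal.ofReal (1 / (n + 1) : ℝ) with hcdef
    have hcpos : c ≠ 0 := by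
      simp only [c, ne_eq, ENNReal.ofReal_eq_zero, not_le]
      positivity
    have hle : μ (V n) ≤ ENNReal.ofReal (‖ω‖ * K) / c := by
      by_contra hlt
      push_neg at hlt
      obtain ⟨k, hkV, hk, hkgt⟩ := Measure.Regular.innerRegular (hVopen n) _ hlt
      have h1 : c * μ k ≤ ∫⁻ x in k, ENNReal.ofReal (g x) ∂μ := by
        calc c * μ k = ∫⁻ _ in k, c ∂μ := by
              rw [lintegral_const, Measure.restrict_apply_univ]
          _ ≤ ∫⁻ x in k, ENNReal.ofReal (g x) ∂μ := by
              refine setLIntegral_mono hgc.measurable.ennreal_ofReal (fun x hx => ?_)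
              exact ENNReal.ofReal_le_ofReal (hkV hx).le
      have h2 := h1.trans (key k hk)
      rw [ENNReal.div_lt_iff (Or.inl hcpos) (Or.inr ENNReal.ofReal_ne_top)] at hkgt
      rw [mul_comm (μ k) c] at hkgt
      exact absurd h2 (not_le.mpr hkgt)
    exact (hle.trans_lt (ENNReal.div_lt_top ENNReal.ofReal_ne_top hcpos)).ne
  -- main lintegral bound
  have hmain : ∫⁻ x, ENNReal.ofReal (g x) ∂μ ≤ ENNReal.ofReal (‖ω‖ * K) := by
    set h : ℕ → X → ℝ≥0∞ := fun n => (V n).indicator (fun x => ENNReal.ofReal (g x)) with hhdef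
    have hVmono : Monotone V := by
      intro m n hmn x hx
      simp only [hVdef, Set.mem_setOf_eq] at hx ⊢
      refine lt_of_le_of_lt ?_ hx
      have : (m : ℝ) + 1 ≤ (n : ℝ) + 1 := by exact_mod_cast Nat.succ_le_succ hmn
      exact one_div_le_one_div_of_le (by positivity) this
    have hhmeas : ∀ n, Measurable (h n) :=
      fun n => hgc.measurable.ennreal_ofReal.indicator (hVopen n).measurableSet
    have hhmono : Monotone h := fun m n hmn x =>
      Set.indicator_le_indicator_of_subset (hVmono hmn) (fun _ => zero_le) x
    have hsup : ∀ x, ⨆ n, h n x = ENNReal.ofReal (g x) := by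
      intro x
      refine le_antisymm (iSup_le fun n => Set.indicator_le_self _ _ x) ?_
      rcases lt_or_eq_of_le (hg0 x) with hx | hx
      · obtain ⟨n, hn⟩ := exists_nat_one_div_lt hx
        have hxV : x ∈ V n := by
          simpa [V] using hn
        refine le_trans (le_of_eq ?_) (le_iSup _ n)
        simp only [hhdef]
        rw [Set.indicator_of_mem hxV]
      · simp [← hx]
    calc ∫⁻ x, ENNReal.ofReal (g x) ∂μ = ∫⁻ x, ⨆ n, h n x ∂μ := by
          simp_rw [hsup]
      _ = ⨆ n, ∫⁻ x, h n x ∂μ := lintegral_iSup hhmeas hhmono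
      _ ≤ ENNReal.ofReal (‖ω‖ * K) := by
          refine iSup_le fun n => ?_
          simp only [hhdef]
          rw [lintegral_indicator (hVopen n).measurableSet]
          exact keyU (V n) (hVopen n) (hVfin n)
  have hg_int : Integrable g μ := by
    refine ⟨hgc.aestronglyMeasurable, ?_⟩
    rw [hasFiniteIntegral_iff_ofReal (ae_of_all _ hg0)]
    exact lt_of_le_of_lt hmain ENNReal.ofReal_lt_top
  have hint : Integrable (fun x => ω (f x)) μ := by
    have := hg_int.ofReal (𝕜 := ℂ)
    simpa [← hωf] using this
  refine ⟨hint, ?_⟩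
  have hiq : ∫ x, ω (f x) ∂μ = ((∫ x, g x ∂μ : ℝ) : ℂ) := by
    simp_rw [hωf]
    exact integral_ofReal
  rw [hiq]
  rw [Complex.norm_real, Real.norm_of_nonneg (integral_nonneg hg0)]
  rw [integral_eq_lintegral_of_nonneg_ae (ae_of_all _ hg0) hgc.aestronglyMeasurable]
  calc (∫⁻ x, ENNReal.ofReal (g x) ∂μ).toReal
      ≤ (ENNReal.ofReal (‖ω‖ * K)).toReal := ENNReal.toReal_mono ENNReal.ofReal_ne_top hmain
    _ = ‖ω‖ * K := ENNReal.toReal_ofReal (mul_nonneg (norm_nonneg ω) hK)
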